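/- arXiv:2005.01681 — 5 statements merged into one kernel-verified Lean document; each statement's English description precedes it below -/
import Mathlib

section
/- In an acyclic monoid H, every element of finite order is a unit, where the order of x is the cardinality of the set {xⁿ : n ≥ 1}. -/
theorem stmt7 {M : Type*} [Monoid M]
    (hac : ∀ u x v : M, (¬ IsUnit u ∨ ¬ IsUnit v) → u * x * v ≠ x)
    (x : M) (hfin : {y : M | ∃ n : ℕ, 1 ≤ n ∧ y = x ^ n}.Finite) : IsUnit x := by
  -- find m < n with x^(m+1) = x^(n+1)
  have : Finite {y : M | ∃ n : ℕ, 1 ≤ n ∧ y = x ^ n} := hfin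
  have hne : ∃ a b : ℕ, a ≠ b ∧ x ^ (a+1) = x ^ (b+1) := by
    obtain ⟨a, b, hab, h⟩ := Finite.exists_ne_map_eq_of_infinite
      (fun n : ℕ => (⟨x ^ (n+1), n+1, Nat.le_add_left 1 n, rfl⟩ :
        {y : M | ∃ n : ℕ, 1 ≤ n ∧ y = x ^ n}))
    exact ⟨a, b, hab, by simpa using congrArg Subtype.val h⟩
  obtain ⟨a, b, hab, h⟩ := hne
  -- wlog a < b
  have key : ∃ d : ℕ, 1 ≤ d ∧ IsUnit (x ^ d) := by
    rcases Nat.lt_or_ge a b with hlt | hge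
    · obtain ⟨d, hd⟩ : ∃ d, b = a + d := ⟨b - a, by omega⟩
      have hd1 : 1 ≤ d := by omega
      have : x ^ d * x ^ (a+1) * 1 = x ^ (a+1) := by
        rw [mul_one, ← pow_add, show d+(a+1)=a+d+1 by omega]; rw [hd] at h; exact h.symm
      refine ⟨d, hd1, ?_⟩
      by_contra hu
      exact hac _ _ _ (Or.inl hu) this
    · have hlt : b < a := by omega
      obtain ⟨d, hd⟩ : ∃ d, a = b + d := ⟨a - b, by omega⟩
      have hd1 : 1 ≤ d := by omega
      have : x ^ d * x ^ (b+1) * 1 = x ^ (b+1) := by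
        rw [mul_one, ← pow_add, show d+(b+1)=b+d+1 by omega]; rw [hd] at h; exact h
      refine ⟨d, hd1, ?_⟩
      by_contra hu
      exact hac _ _ _ (Or.inl hu) this
  obtain ⟨d, hd1, hu⟩ := key
  -- x^d is a unit with d ≥ 1 ⟹ x is a unit
  obtain ⟨u, hu⟩ := hu
  have hr : x * (x ^ (d-1) * ↑u⁻¹) = 1 := by
    rw [← mul_assoc, ← pow_succ']
    have : d - 1 + 1 = d := by omega
    rw [this, ← hu, Units.mul_inv]
  have hl : (↑u⁻¹ * x ^ (d-1)) * x = 1 := by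
    rw [mul_assoc, ← pow_succ]
    have : d - 1 + 1 = d := by omega
    rw [this, ← hu, Units.inv_mul]
  have heq : (↑u⁻¹ * x ^ (d-1) : M) = x ^ (d-1) * ↑u⁻¹ := by
    calc (↑u⁻¹ * x ^ (d-1) : M) = ↑u⁻¹ * x ^ (d-1) * (x * (x ^ (d-1) * ↑u⁻¹)) := by
          rw [hr, mul_one]
      _ = (↑u⁻¹ * x ^ (d-1) * x) * (x ^ (d-1) * ↑u⁻¹) := by simp [mul_assoc]
      _ = x ^ (d-1) * ↑u⁻¹ := by rw [hl, one_mul]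
  exact ⟨⟨x, x ^ (d-1) * ↑u⁻¹, hr, by rw [← heq]; exact hl⟩, rfl⟩
end

section
/- Every unit-cancellative normalizing monoid is acyclic. -/
/-- In a unit-cancellative monoid, a one-sided inverse relation `a * b = 1`
forces `b * a = 1` as well. -/
theorem aux_one_sided {M : Type*} [Monoid M]
    (huc : ∀ x y : M, ¬ IsUnit y → x * y ≠ x ∧ y * x ≠ x)
    {a b : M} (hab : a * b = 1) : b * a = 1 := by
  have hba : IsUnit (b * a) := by
    by_contra h
    exact (huc b (b * a) h).2 (by rw [mul_assoc, hab, mul_one])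
  obtain ⟨z, hz1, hz2⟩ := isUnit_iff_exists.mp hba
  -- z * (b * a) = 1, so (z*b)*a = 1; also z*b = b
  have hzb : z * b = b := by
    calc z * b = z * b * (a * b) := by rw [hab, mul_one]
    _ = z * (b * a) * b := by simp [mul_assoc]
    _ = b := by rw [hz2, one_mul]
  calc b * a = z * b * a := by rw [hzb]
  _ = z * (b * a) := by rw [mul_assoc]
  _ = 1 := hz2

theorem stmt9 {M : Type*} [Monoid M]
    (hnorm : ∀ a x : M, (∃ h : M, a * h = x) ↔ (∃ h : M, h * a = x))
    (huc : ∀ x y : M, ¬ IsUnit y → x * y ≠ x ∧ y * x ≠ x) :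
    ∀ u x v : M, (¬ IsUnit u ∨ ¬ IsUnit v) → u * x * v ≠ x := by
  intro u x v hcase heq
  -- normalizing: x * v = h * x for some h
  obtain ⟨h, hh⟩ := (hnorm x (x * v)).mp ⟨v, rfl⟩
  -- normalizing: u * x = x * k for some k
  obtain ⟨k, hk⟩ := (hnorm x (u * x)).mpr ⟨u, rfl⟩
  -- (u * h) * x = u * (x * v) = x
  have h1 : (u * h) * x = x := by rw [mul_assoc, hh, ← mul_assoc, heq]
  -- x * (k * v) = (u * x) * v = x
  have h2 : x * (k * v) = x := by rw [← mul_assoc, hk, heq]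
  have huh : IsUnit (u * h) := by
    by_contra hc; exact (huc x (u * h) hc).2 h1
  have hkv : IsUnit (k * v) := by
    by_contra hc; exact (huc x (k * v) hc).1 h2
  obtain ⟨c, hc1, hc2⟩ := isUnit_iff_exists.mp huh
  -- u * (h * c) = 1 hence u is a unit
  have hu : IsUnit u := isUnit_iff_exists.mpr ⟨h * c,
    (by rw [← mul_assoc]; exact hc1),
    aux_one_sided huc (by rw [← mul_assoc]; exact hc1)⟩
  obtain ⟨d, hd1, hd2⟩ := isUnit_iff_exists.mp hkv
  -- (d * k) * v = 1 hence v is a unit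
  have hvk : (d * k) * v = 1 := by rw [mul_assoc]; exact hd2
  have hv : IsUnit v := isUnit_iff_exists.mpr ⟨d * k, aux_one_sided huc hvk, hvk⟩
  rcases hcase with h' | h' <;> exact h' ‹_›
end

section
/- Let R be a non-trivial commutative ring and n ≥ 2, and let S_n(R) be the multiplicative monoid of n×n matrices over R whose determinant is a regular (cancellable) element of R. Then S_n(R) is an acyclic monoid: if ABC = B for A, B, C ∈ S_n(R), then A and C are invertible matrices. -/
open Matrix

theorem stmt10 {R : Type*} [CommRing R] [Nontrivial R] {n : Type*} [Fintype n] [DecidableEq n]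
    (hn : 2 ≤ Fintype.card n)
    (A B C : Matrix n n R)
    (hA : ∀ x : R, x ≠ 0 → A.det * x ≠ 0)
    (hB : ∀ x : R, x ≠ 0 → B.det * x ≠ 0)
    (hC : ∀ x : R, x ≠ 0 → C.det * x ≠ 0)
    (h : A * B * C = B) : IsUnit A ∧ IsUnit C := by
  have hdet : A.det * B.det * C.det = B.det := by
    have := congrArg Matrix.det h
    simpa [Matrix.det_mul] using this
  have hkey : A.det * C.det = 1 := by
    by_contra hne
    have hx : A.det * C.det - 1 ≠ 0 := sub_ne_zero.mpr hne
    apply hB _ hx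
    ring_nf
    linear_combination hdet
  constructor
  · rw [Matrix.isUnit_iff_isUnit_det]
    exact IsUnit.of_mul_eq_one _ hkey
  · rw [Matrix.isUnit_iff_isUnit_det]
    exact IsUnit.of_mul_eq_one (a := C.det) A.det (by linear_combination hkey)
end

section
/- In an acyclic monoid, every prime element is an atom. -/
/-- `a` two-sided divides `b` in the monoid: `b ∈ HaH`. -/
def TDvd {M : Type*} [Monoid M] (a b : M) : Prop := ∃ u v : M, u * a * v = b

/-- In an acyclic monoid, a right inverse is a two-sided inverse. -/
lemma acyclic_mul_eq_one_comm {M : Type*} [Monoid M]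
    (hac : ∀ u x v : M, (¬ IsUnit u ∨ ¬ IsUnit v) → u * x * v ≠ x)
    {a b : M} (h : a * b = 1) : b * a = 1 := by
  have hu : IsUnit (b * a) := by
    by_contra hn
    exact hac 1 a (b * a) (Or.inr hn) (by rw [one_mul, ← mul_assoc, h, one_mul])
  have hid : (b * a) * (b * a) = (b * a) * 1 := by
    rw [mul_one, mul_assoc, ← mul_assoc a, h, one_mul]
  exact hu.mul_left_cancel hid

theorem stmt17 {M : Type*} [Monoid M]
    (hac : ∀ u x v : M, (¬ IsUnit u ∨ ¬ IsUnit v) → u * x * v ≠ x)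
    (p : M) (hp : ¬ IsUnit p ∧ ∀ x y : M, TDvd p (x * y) → TDvd p x ∨ TDvd p y) :
    ¬ IsUnit p ∧ ∀ x y : M, ¬ IsUnit x → ¬ IsUnit y → p ≠ x * y := by
  refine ⟨hp.1, fun x y hx hy heq => ?_⟩
  rcases hp.2 x y ⟨1, 1, by rw [one_mul, mul_one, heq]⟩ with ⟨u, v, huv⟩ | ⟨u, v, huv⟩
  · -- p divides x : x = u * p * v, so u * p * (v * y) = p
    have hvy : ¬ IsUnit (v * y) := by
      rintro ⟨w, hw⟩
      have h1 : (↑w⁻¹ * v) * y = 1 := by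
        rw [mul_assoc, ← hw]; exact w.inv_mul
      have h2 : y * (↑w⁻¹ * v) = 1 := acyclic_mul_eq_one_comm hac h1
      exact hy ⟨⟨y, ↑w⁻¹ * v, h2, h1⟩, rfl⟩
    exact hac u p (v * y) (Or.inr hvy)
      (by rw [← mul_assoc, huv, ← heq])
  · -- p divides y : y = u * p * v, so (x * u) * p * v = p
    have hxu : ¬ IsUnit (x * u) := by
      rintro ⟨w, hw⟩
      have h1 : x * (u * ↑w⁻¹) = 1 := by
        rw [← mul_assoc, ← hw]; exact w.mul_inv
      have h2 : (u * ↑w⁻¹) * x = 1 := acyclic_mul_eq_one_comm hac h1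
      exact hx ⟨⟨x, u * ↑w⁻¹, h1, h2⟩, rfl⟩
    exact hac (x * u) p v (Or.inl hxu)
      (by rw [mul_assoc x u, mul_assoc x, huv, ← heq])
end

section
/- Let p be a fixed prime number and let H be the additive submonoid of ℚ≥0 generated by 1 + 1/p together with all positive rationals whose denominator is coprime to p. Then 1 + 1/p is an atom of H, but 1 + 1/p is not a prime element of H. -/
theorem stmt19 (p : ℕ) (hp : p.Prime) :
    let H : AddSubmonoid ℚ :=
      AddSubmonoid.closure
        (insert (1 + 1 / (p : ℚ)) {q : ℚ | 0 < q ∧ Nat.Coprime q.den p})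
    -- `1 + 1/p` is an atom of `H`:
    ((1 + 1 / (p : ℚ)) ∈ H ∧ (1 + 1 / (p : ℚ)) ≠ 0 ∧
        ∀ x ∈ H, ∀ y ∈ H, x ≠ 0 → y ≠ 0 → (1 + 1 / (p : ℚ)) ≠ x + y) ∧
    -- but `1 + 1/p` is not a prime element of `H`:
    ¬ (∀ x ∈ H, ∀ y ∈ H, (∃ z ∈ H, x + y = (1 + 1 / (p : ℚ)) + z) →
        (∃ z ∈ H, x = (1 + 1 / (p : ℚ)) + z) ∨ (∃ z ∈ H, y = (1 + 1 / (p : ℚ)) + z)) := by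
  intro H
  have hp0 : (0:ℚ) < (p:ℚ) := by exact_mod_cast hp.pos
  have hpne : (p:ℚ) ≠ 0 := ne_of_gt hp0
  set a : ℚ := 1 + 1 / (p:ℚ) with ha_def
  have hainv : 0 < 1 / (p:ℚ) := by positivity
  have ha_pos : 0 < a := by rw [ha_def]; linarith
  have haH : a ∈ H := AddSubmonoid.subset_closure (Set.mem_insert _ _)
  -- structure lemma
  have hstruct : ∀ x ∈ H, ∃ m : ℕ, ∃ s : ℚ, 0 ≤ s ∧ s.den.Coprime p ∧ x = m * a + s := by
    intro x hx
    induction hx using AddSubmonoid.closure_induction with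
    | mem q hq =>
      rcases hq with hq | hq
      · exact ⟨1, 0, le_refl 0, by simpa using Nat.coprime_one_left p, by rw [hq, ha_def]; ring⟩
      · exact ⟨0, q, le_of_lt hq.1, hq.2, by simp⟩
    | zero => exact ⟨0, 0, le_refl 0, by simpa using Nat.coprime_one_left p, by simp⟩
    | add u v _ _ hu hv =>
      obtain ⟨m, s, hs0, hsc, rfl⟩ := hu
      obtain ⟨n, t, ht0, htc, rfl⟩ := hv
      refine ⟨m + n, s + t, by linarith, ?_, by push_cast; ring⟩
      exact Nat.Coprime.coprime_dvd_left (Rat.add_den_dvd s t) (Nat.Coprime.mul hsc htc)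
  -- divisibility lemma
  have hdvd : ∀ (m : ℕ) (x s : ℚ), x.den.Coprime p → s.den.Coprime p →
      x = m * a + s → p ∣ m := by
    intro m x s hxc hsc hxe
    set r : ℚ := x - s - (m:ℚ) with hr_def
    have hrval : r = (m:ℚ) / (p:ℚ) := by
      rw [hr_def, hxe, ha_def]; field_simp; ring
    have hrden : r.den.Coprime p := by
      have h1 : (x + -s).den ∣ x.den * s.den := by
        simpa using Rat.add_den_dvd x (-s)
      have h2 : r.den ∣ (x + -s).den * ((-(m:ℚ)).den) := by
        have := Rat.add_den_dvd (x + -s) (-(m:ℚ))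
        simpa [hr_def, sub_eq_add_neg] using this
      have h3 : r.den ∣ x.den * s.den := by
        simpa using h2.trans (Nat.mul_dvd_mul_right h1 _)
      exact Nat.Coprime.coprime_dvd_left h3 (Nat.Coprime.mul hxc hsc)
    have hrdvd : r.den ∣ p := by
      have h := Rat.den_dvd (m:ℤ) (p:ℤ)
      rw [Rat.divInt_eq_div] at h
      have h' : (r.den : ℤ) ∣ (p:ℤ) := by
        rw [hrval]; exact_mod_cast h
      exact_mod_cast h'
    have hrden1 : r.den = 1 :=
      Nat.dvd_one.mp (hrden.gcd_eq_one ▸ Nat.dvd_gcd dvd_rfl hrdvd)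
    have hrint : (r.num : ℚ) = r := by
      rw [← Rat.den_eq_one_iff]; exact hrden1
    have hmval : (m:ℤ) = r.num * (p:ℤ) := by
      have : (m:ℚ) = (r.num : ℚ) * (p:ℚ) := by
        rw [hrint, hrval]; field_simp
      exact_mod_cast this
    have : (p:ℤ) ∣ (m:ℤ) := ⟨r.num, by linarith⟩
    exact_mod_cast this
  refine ⟨⟨haH, ne_of_gt ha_pos, ?_⟩, ?_⟩
  · -- atom
    intro x hx y hy hx0 hy0 heq
    obtain ⟨m, s, hs0, hsc, rfl⟩ := hstruct x hx
    obtain ⟨n, t, ht0, htc, rfl⟩ := hstruct y hy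
    have hsum : a = ((m + n : ℕ):ℚ) * a + (s + t) := by push_cast; linarith
    match hk : m + n with
    | 0 =>
      have hm : m = 0 := by omega
      have hn : n = 0 := by omega
      have hst : a = s + t := by rw [hsum, hk]; push_cast; ring
      have hc : (s + t).den.Coprime p :=
        Nat.Coprime.coprime_dvd_left (Rat.add_den_dvd s t) (Nat.Coprime.mul hsc htc)
      have : p ∣ 1 := hdvd 1 (s + t) 0 hc (by simpa using Nat.coprime_one_left p)
        (by rw [← hst]; push_cast; ring)
      exact hp.one_lt.ne' (Nat.dvd_one.mp this)
    | 1 =>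
      have hst : s + t = 0 := by
        rw [hk] at hsum; push_cast at hsum; linarith
      have hs : s = 0 := by linarith
      have ht : t = 0 := by linarith
      rcases Nat.add_eq_one_iff.mp hk with ⟨hm, hn⟩ | ⟨hm, hn⟩
      · exact hx0 (by rw [hm, hs]; simp)
      · exact hy0 (by rw [hn, ht]; simp)
    | (k + 2) =>
      have : ((k + 2 : ℕ):ℚ) ≥ 2 := by push_cast; linarith [Nat.cast_nonneg (α := ℚ) k]
      rw [hk] at hsum
      nlinarith [mul_le_mul_of_nonneg_right this ha_pos.le]
  · -- not prime
    intro hprime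
    have h1H : (1:ℚ) ∈ H := AddSubmonoid.subset_closure
      (Set.mem_insert_of_mem _ ⟨one_pos, by simpa using Nat.coprime_one_left p⟩)
    have hpH : (p:ℚ) ∈ H := AddSubmonoid.subset_closure
      (Set.mem_insert_of_mem _ ⟨hp0, by simpa using Nat.coprime_one_left p⟩)
    have hzH : ((p - 1 : ℕ) • a) ∈ H := nsmul_mem haH _
    have hcast : ((p - 1 : ℕ):ℚ) = (p:ℚ) - 1 := by
      push_cast [Nat.cast_sub hp.one_lt.le]; ring
    have hkey : (1:ℚ) + (p:ℚ) = a + (p - 1 : ℕ) • a := by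
      rw [nsmul_eq_mul, hcast, ha_def]; field_simp; ring
    rcases hprime 1 h1H (p:ℚ) hpH ⟨(p - 1 : ℕ) • a, hzH, hkey⟩ with ⟨z, hzH', hz⟩ | ⟨z, hzH', hz⟩
    · -- 1 = a + z impossible since z ≥ 0 and a > 1
      obtain ⟨m, s, hs0, hsc, rfl⟩ := hstruct z hzH'
      have : (0:ℚ) ≤ (m:ℚ) * a := by positivity
      have ha1 : (1:ℚ) < a := by rw [ha_def]; linarith
      linarith
    · -- p = a + z impossible
      obtain ⟨m, s, hs0, hsc, rfl⟩ := hstruct z hzH'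
      have hpe : (p:ℚ) = ((m + 1 : ℕ):ℚ) * a + s := by push_cast; linarith
      have hdm : p ∣ (m + 1) :=
        hdvd (m + 1) (p:ℚ) s (by simpa using Nat.coprime_one_left p) hsc hpe
      have hge : p ≤ m + 1 := Nat.le_of_dvd (Nat.succ_pos m) hdm
      have hgeQ : (p:ℚ) ≤ ((m + 1 : ℕ):ℚ) := by exact_mod_cast hge
      have hpa : (p:ℚ) * a = (p:ℚ) + 1 := by rw [ha_def]; field_simp
      nlinarith [mul_le_mul_of_nonneg_right hgeQ ha_pos.le]
end
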